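/- Every special path is S-perfect, i.e. if G is a graph obtained from a path P by adding, for each edge in some subset of the edges of P, a new vertex adjacent to exactly the two endpoints of that edge (distinct new vertices for distinct edges), then G is S-perfect. -/
import Mathlib


open SimpleGraph

/-- A set `T` of vertices is *S-independent* in `G` if any two distinct vertices of `T`
are at distance at least 3 in `G` (equivalently, no two of them lie in a common star
subgraph of `G`): they are non-adjacent and have no common neighbor. -/
def SimpleGraph.SIndepSet {V : Type*} (G : SimpleGraph V) (T : Set V) : Prop :=
  ∀ u ∈ T, ∀ w ∈ T, u ≠ w → ¬ G.Adj u w ∧ ∀ x : V, ¬ (G.Adj u x ∧ G.Adj x w)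

/-- `D` is a dominating set of `G`: every vertex is in `D` or adjacent to a vertex of `D`. -/
def SimpleGraph.DominatingSet {V : Type*} (G : SimpleGraph V) (D : Finset V) : Prop :=
  ∀ v : V, v ∈ D ∨ ∃ d ∈ D, G.Adj d v

/-- `α_S(G)`: the maximum size of an S-independent set of vertices of `G`. -/
noncomputable def alphaS {V : Type*} (G : SimpleGraph V) : ℕ :=
  sSup {n | ∃ T : Finset V, G.SIndepSet ↑T ∧ T.card = n}

/-- `θ_S(G)`: the domination number of `G`, i.e. the minimum size of a dominating set
(equivalently, the minimum number of stars needed to cover all vertices of `G`). -/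
noncomputable def thetaS {V : Type*} (G : SimpleGraph V) : ℕ :=
  sInf {n | ∃ D : Finset V, G.DominatingSet D ∧ D.card = n}

/-- `G` is *S-perfect* if `α_S(H) = θ_S(H)` for every induced subgraph `H` of `G`
(induced on any subset of the vertices). -/
def SPerfect {V : Type*} (G : SimpleGraph V) : Prop :=
  ∀ s : Set V, alphaS (G.induce s) = thetaS (G.induce s)

/-- The *special path* on the path with vertices `0, 1, …, n` (edges `i — i+1`):
for each edge index `i ∈ F`, a new vertex is added adjacent to exactly the two
endpoints `i` and `i+1` of that edge. -/
def specialPath (n : ℕ) (F : Finset (Fin n)) :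
    SimpleGraph (Fin (n + 1) ⊕ {i : Fin n // i ∈ F}) :=
  SimpleGraph.fromRel (fun a b =>
    match a, b with
    | Sum.inl a, Sum.inl b => (a.val : ℕ) + 1 = b.val
    | Sum.inl a, Sum.inr i => (a.val : ℕ) = i.1.val ∨ (a.val : ℕ) = i.1.val + 1
    | _, _ => False)

/-! ### Auxiliary machinery -/

/-- The arithmetic adjacency pattern along the linear layout of a special path. -/
def D1 (x y : ℕ) : Prop :=
  x + 1 = y ∨ y + 1 = x ∨ (x + 2 = y ∧ x % 2 = 0) ∨ (y + 2 = x ∧ y % 2 = 0)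

lemma D1.symm {x y : ℕ} (h : D1 x y) : D1 y x := by unfold D1 at *; omega

set_option maxHeartbeats 1000000 in
lemma claimA (a b t : ℕ) (h1 : a ≤ b) (h2 : b = a ∨ D1 a b) (h3 : a ≤ t)
    (h4 : t ≠ a) (h5 : t ≠ b) (h6 : ¬ D1 b t) (h7 : t ≤ b) (h8 : D1 a t) : False := by
  unfold D1 at *; omega

set_option maxHeartbeats 1000000 in
lemma claimB (a b px pt : ℕ) (h1 : a ≤ b) (h2 : b = a ∨ D1 a b) (h3 : a ≤ px)
    (h4 : px ≤ b) (h5 : D1 a px) (h6 : px ≠ a) (h7 : a ≤ pt) (h8 : pt ≠ b)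
    (h9 : ¬ D1 b pt) (h10 : pt ≠ a) (h11 : D1 px pt) (h12 : px ≠ pt) : False := by
  unfold D1 at *; omega

set_option maxHeartbeats 4000000 in
lemma claimC (a b px pt pt2 : ℕ) (h1 : a ≤ b) (h2 : b = a ∨ D1 a b) (h3 : a ≤ px)
    (h4 : px = b ∨ D1 b px) (h5 : px = a ∨ ¬ D1 a px ∨ px ≤ b)
    (h6 : a ≤ pt) (h7 : pt ≠ a) (h8 : pt ≠ b) (h9 : ¬ D1 b pt)
    (h6' : a ≤ pt2) (h7' : pt2 ≠ a) (h8' : pt2 ≠ b) (h9' : ¬ D1 b pt2)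
    (h10 : pt ≠ pt2) (h11 : ¬ D1 pt pt2)
    (h12 : D1 px pt) (h13 : D1 px pt2) (h14 : px ≠ pt) (h15 : px ≠ pt2) : False := by
  unfold D1 at *
  rcases h12 with h12|h12|h12|h12 <;> rcases h13 with h13|h13|h13|h13 <;>
    rcases h4 with h4|h4|h4|h4|h4 <;> omega

section Abstract

variable {V : Type*} [Fintype V] (G : SimpleGraph V) (p : V → ℕ)

/-- The greedy construction: on any finite vertex set `s`, there is a set `D`
dominating `s` and a set `T` that is S-independent relative to `s`, with `|D| ≤ |T|`. -/
lemma greedy (hp : Function.Injective p)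
    (hadj : ∀ u v, G.Adj u v ↔ u ≠ v ∧ D1 (p u) (p v)) :
    ∀ (k : ℕ) (s : Finset V), s.card ≤ k →
      ∃ D T : Finset V, D ⊆ s ∧ T ⊆ s ∧
        (∀ v ∈ s, v ∈ D ∨ ∃ d ∈ D, G.Adj d v) ∧
        (∀ u ∈ T, ∀ w ∈ T, u ≠ w →
          ¬ G.Adj u w ∧ ∀ x ∈ s, ¬ (G.Adj u x ∧ G.Adj x w)) ∧
        D.card ≤ T.card := by
  classical
  intro k
  induction k with
  | zero =>
      intro s hs
      have : s = ∅ := Finset.card_eq_zero.mp (Nat.le_zero.mp hs)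
      subst this
      exact ⟨∅, ∅, by simp, by simp, by simp, by simp, le_rfl⟩
  | succ k ih =>
      intro s hs
      rcases s.eq_empty_or_nonempty with rfl | hne
      · exact ⟨∅, ∅, by simp, by simp, by simp, by simp, le_rfl⟩
      obtain ⟨u, hu, hmin⟩ := s.exists_min_image p hne
      set N : Finset V := s.filter (fun x => x = u ∨ G.Adj u x) with hN
      have huN : u ∈ N := by simp [hN, hu]
      obtain ⟨d, hdN, hmax⟩ := N.exists_max_image p ⟨u, huN⟩
      have hds : d ∈ s := (Finset.mem_filter.mp hdN).1
      have hdu : d = u ∨ G.Adj u d := (Finset.mem_filter.mp hdN).2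
      set s' : Finset V := s.filter (fun v => ¬ (v = d ∨ G.Adj d v)) with hs'
      have hs's : s' ⊆ s := Finset.filter_subset _ _
      have hds' : d ∉ s' := by simp [hs']
      have hcard : s'.card ≤ k := by
        have h1 : s' ⊆ s.erase d := by
          intro x hx
          exact Finset.mem_erase.mpr ⟨fun h => hds' (h ▸ hx), hs's hx⟩
        have := Finset.card_le_card h1
        have := Finset.card_erase_of_mem hds
        omega
      obtain ⟨D', T', hD's, hT's, hdom', hind', hcard'⟩ := ih s' hcard
      -- membership facts
      have hmem_s' : ∀ t ∈ s', t ∈ s ∧ t ≠ d ∧ ¬ G.Adj d t := by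
        intro t ht
        have := Finset.mem_filter.mp ht
        exact ⟨this.1, fun h => this.2 (Or.inl h), fun h => this.2 (Or.inr h)⟩
      have hus' : u ∉ s' := by
        intro h
        rcases hmem_s' u h with ⟨_, h1, h2⟩
        rcases hdu with h3 | h3
        · exact h1 h3.symm
        · exact h2 h3.symm
      -- arithmetic facts
      have hF2 : ∀ y ∈ s, (y = u ∨ G.Adj u y) → p y ≤ p d := by
        intro y hy hy2
        exact hmax y (Finset.mem_filter.mpr ⟨hy, hy2⟩)
      have hub : p u ≤ p d := hF2 u hu (Or.inl rfl)
      have hduA : p d = p u ∨ D1 (p u) (p d) := by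
        rcases hdu with h | h
        · exact Or.inl (by rw [h])
        · exact Or.inr ((hadj u d).mp h).2
      have hs'facts : ∀ t ∈ s', p u ≤ p t ∧ p t ≠ p u ∧ p t ≠ p d ∧ ¬ D1 (p d) (p t) := by
        intro t ht
        obtain ⟨hts, htd, htadj⟩ := hmem_s' t ht
        have htu : t ≠ u := fun h => hus' (h ▸ ht)
        refine ⟨hmin t hts, fun h => htu (hp h), fun h => htd (hp h), fun h => ?_⟩
        exact htadj ((hadj d t).mpr ⟨fun h' => htd h'.symm, h⟩)
      -- the key lemma for pairs (u, t) with t ∈ s'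
      have key : ∀ t ∈ s', ¬ G.Adj u t ∧ ∀ x ∈ s, ¬ (G.Adj u x ∧ G.Adj x t) := by
        intro t ht
        obtain ⟨h3, h4, h5, h6⟩ := hs'facts t ht
        obtain ⟨hts, _, _⟩ := hmem_s' t ht
        constructor
        · intro hA
          have h7 : p t ≤ p d := hF2 t hts (Or.inr hA)
          exact claimA (p u) (p d) (p t) hub hduA h3 h4 h5 h6 h7 ((hadj u t).mp hA).2
        · rintro x hx ⟨hux, hxt⟩
          have hxA := (hadj u x).mp hux
          have hxtA := (hadj x t).mp hxt
          have h4' : p x ≤ p d := hF2 x hx (Or.inr hux)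
          exact claimB (p u) (p d) (p x) (p t) hub hduA (hmin x hx) h4' hxA.2
            (fun h => hxA.1 (hp h.symm)) h3 h5 h6 h4 hxtA.2 (fun h => hxtA.1 (hp h))
      refine ⟨insert d D', insert u T', ?_, ?_, ?_, ?_, ?_⟩
      · exact Finset.insert_subset hds (hD's.trans hs's)
      · exact Finset.insert_subset hu (hT's.trans hs's)
      · -- domination
        intro v hv
        by_cases hvs' : v ∈ s'
        · rcases hdom' v hvs' with h | ⟨d', hd', hadj'⟩
          · exact Or.inl (Finset.mem_insert_of_mem h)
          · exact Or.inr ⟨d', Finset.mem_insert_of_mem hd', hadj'⟩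
        · have : v = d ∨ G.Adj d v := by
            by_contra h
            exact hvs' (Finset.mem_filter.mpr ⟨hv, h⟩)
          rcases this with rfl | h
          · exact Or.inl (Finset.mem_insert_self _ _)
          · exact Or.inr ⟨d, Finset.mem_insert_self _ _, h⟩
      · -- S-independence
        intro a ha b hb hab
        rcases Finset.mem_insert.mp ha with rfl | ha' <;>
          rcases Finset.mem_insert.mp hb with rfl | hb'
        · exact absurd rfl hab
        · exact key b (hT's hb')
        · obtain ⟨k1, k2⟩ := key a (hT's ha')
          exact ⟨fun h => k1 h.symm, fun x hx ⟨h1, h2⟩ => k2 x hx ⟨h2.symm, h1.symm⟩⟩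
        · -- both in T'
          obtain ⟨k1, k2⟩ := hind' a ha' b hb' hab
          refine ⟨k1, ?_⟩
          rintro x hx ⟨hax, hxb⟩
          by_cases hxs' : x ∈ s'
          · exact k2 x hxs' ⟨hax, hxb⟩
          · -- x ∈ s \ s'
            have hxd : x = d ∨ G.Adj d x := by
              by_contra h
              exact hxs' (Finset.mem_filter.mpr ⟨hx, h⟩)
            have h4 : p x = p d ∨ D1 (p d) (p x) := by
              rcases hxd with h | h
              · exact Or.inl (by rw [h])
              · exact Or.inr ((hadj d x).mp h).2
            have h5 : p x = p u ∨ ¬ D1 (p u) (p x) ∨ p x ≤ p d := by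
              by_cases h1 : x = u
              · exact Or.inl (by rw [h1])
              by_cases h2 : D1 (p u) (p x)
              · exact Or.inr (Or.inr (hF2 x hx (Or.inr ((hadj u x).mpr
                  ⟨fun h => h1 h.symm, h2⟩))))
              · exact Or.inr (Or.inl h2)
            obtain ⟨ha3, ha4, ha5, ha6⟩ := hs'facts a (hT's ha')
            obtain ⟨hb3, hb4, hb5, hb6⟩ := hs'facts b (hT's hb')
            have haxA := (hadj a x).mp hax
            have hxbA := (hadj x b).mp hxb
            exact claimC (p u) (p d) (p x) (p a) (p b) hub hduA (hmin x hx) h4 h5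
              ha3 ha4 ha5 ha6 hb3 hb4 hb5 hb6
              (fun h => hab (hp h)) (fun h => k1 ((hadj a b).mpr ⟨hab, h⟩))
              (D1.symm haxA.2) hxbA.2
              (fun h => haxA.1 (hp h.symm)) (fun h => hxbA.1 (hp h))
      · -- cardinalities
        have h1 : d ∉ D' := fun h => hds' (hD's h)
        have h2 : u ∉ T' := fun h => hus' (hT's h)
        rw [Finset.card_insert_of_notMem h1, Finset.card_insert_of_notMem h2]
        omega

/-- The easy direction, valid in any finite graph: `α_S ≤ θ_S`. -/
lemma sindep_card_le_dom_card {W : Type*} (H : SimpleGraph W) (T D : Finset W)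
    (hT : H.SIndepSet ↑T) (hD : H.DominatingSet D) : T.card ≤ D.card := by
  classical
  set f : W → W := fun t => if h : ∃ d ∈ D, H.Adj d t then h.choose else t with hf
  have hprop : ∀ t ∈ T, f t ∈ D ∧ (f t = t ∨ H.Adj (f t) t) := by
    intro t _
    by_cases h : ∃ d ∈ D, H.Adj d t
    · have := h.choose_spec
      simp only [hf, dif_pos h]
      exact ⟨this.1, Or.inr this.2⟩
    · have hft : f t = t := by simp only [hf, dif_neg h]
      rw [hft]
      exact ⟨(hD t).resolve_right h, Or.inl rfl⟩
  apply Finset.card_le_card_of_injOn f (fun t ht => (hprop t ht).1)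
  intro t1 ht1 t2 ht2 heq
  by_contra hne
  obtain ⟨hnadj, hnocomm⟩ := hT t1 ht1 t2 ht2 hne
  rcases (hprop t1 ht1).2 with h1 | h1 <;> rcases (hprop t2 ht2).2 with h2 | h2
  · exact hne (h1 ▸ h2 ▸ heq ▸ rfl)
  · exact hnadj (h1 ▸ heq ▸ h2)
  · exact hnadj (h2 ▸ heq.symm ▸ h1).symm
  · exact hnocomm (f t1) ⟨h1.symm, heq ▸ h2⟩

/-- The main abstract result: any finite graph whose adjacency is given by the
special-path pattern along an injective linear layout satisfies `α_S = θ_S`. -/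
lemma alphaS_eq_thetaS (hp : Function.Injective p)
    (hadj : ∀ u v, G.Adj u v ↔ u ≠ v ∧ D1 (p u) (p v)) :
    alphaS G = thetaS G := by
  classical
  have hAne : {n | ∃ T : Finset V, G.SIndepSet ↑T ∧ T.card = n}.Nonempty :=
    ⟨0, ∅, by simp [SimpleGraph.SIndepSet], by simp⟩
  have hBdd : BddAbove {n | ∃ T : Finset V, G.SIndepSet ↑T ∧ T.card = n} := by
    refine ⟨Fintype.card V, ?_⟩
    rintro n ⟨T, _, rfl⟩
    exact Finset.card_le_univ T
  have hBne : {n | ∃ D : Finset V, G.DominatingSet D ∧ D.card = n}.Nonempty :=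
    ⟨(Finset.univ : Finset V).card, Finset.univ,
      fun v => Or.inl (Finset.mem_univ v), rfl⟩
  apply le_antisymm
  · -- α_S ≤ θ_S
    apply le_csInf hBne
    rintro b ⟨D, hD, rfl⟩
    apply csSup_le hAne
    rintro a ⟨T, hT, rfl⟩
    exact sindep_card_le_dom_card G T D hT hD
  · -- θ_S ≤ α_S, via the greedy construction
    obtain ⟨D, T, _, _, hdom, hind, hcard⟩ :=
      greedy G p hp hadj (Finset.univ : Finset V).card Finset.univ le_rfl
    have hDdom : G.DominatingSet D := fun v => hdom v (Finset.mem_univ v)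
    have hTind : G.SIndepSet ↑T := by
      intro a ha b hb hab
      obtain ⟨k1, k2⟩ := hind a ha b hb hab
      exact ⟨k1, fun x => k2 x (Finset.mem_univ x)⟩
    calc thetaS G ≤ D.card := Nat.sInf_le ⟨D, hDdom, rfl⟩
      _ ≤ T.card := hcard
      _ ≤ alphaS G := le_csSup hBdd ⟨T, hTind, rfl⟩

end Abstract

/-- The linear layout of the vertices of a special path. -/
def spPos {n : ℕ} {F : Finset (Fin n)} :
    (Fin (n + 1) ⊕ {i : Fin n // i ∈ F}) → ℕ
  | Sum.inl a => 2 * a.val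
  | Sum.inr i => 2 * i.1.val + 1

lemma spPos_injective {n : ℕ} {F : Finset (Fin n)} :
    Function.Injective (spPos (n := n) (F := F)) := by
  rintro (a | i) (b | j) h <;> simp only [spPos] at h
  · exact congrArg Sum.inl (Fin.ext (by omega))
  · omega
  · omega
  · exact congrArg Sum.inr (Subtype.ext (Fin.ext (by omega)))

lemma specialPath_adj {n : ℕ} (F : Finset (Fin n))
    (u v : Fin (n + 1) ⊕ {i : Fin n // i ∈ F}) :
    (specialPath n F).Adj u v ↔ u ≠ v ∧ D1 (spPos u) (spPos v) := by
  have hiff : ∀ a b : Fin (n + 1) ⊕ {i : Fin n // i ∈ F},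
      (specialPath n F).Adj a b ↔ a ≠ b ∧
        ((match a, b with
          | Sum.inl a, Sum.inl b => (a.val : ℕ) + 1 = b.val
          | Sum.inl a, Sum.inr i => (a.val : ℕ) = i.1.val ∨ (a.val : ℕ) = i.1.val + 1
          | _, _ => False) ∨
         (match b, a with
          | Sum.inl a, Sum.inl b => (a.val : ℕ) + 1 = b.val
          | Sum.inl a, Sum.inr i => (a.val : ℕ) = i.1.val ∨ (a.val : ℕ) = i.1.val + 1
          | _, _ => False)) := fun a b => Iff.rfl
  rw [hiff]
  rcases u with a | i <;> rcases v with b | j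
  · constructor
    · rintro ⟨hne, h⟩
      refine ⟨hne, ?_⟩
      simp only [spPos, D1]
      rcases h with h | h <;> omega
    · rintro ⟨hne, h⟩
      refine ⟨hne, ?_⟩
      simp only [spPos, D1] at h
      have hne' : a.val ≠ b.val := fun h' => hne (congrArg Sum.inl (Fin.ext h'))
      omega
  · constructor
    · rintro ⟨hne, h⟩
      refine ⟨hne, ?_⟩
      simp only [spPos, D1]
      rcases h with h | h
      · have h' : (a.val : ℕ) = j.1.val ∨ (a.val : ℕ) = j.1.val + 1 := h
        omega
      · exact absurd h not_false
    · rintro ⟨hne, h⟩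
      refine ⟨hne, Or.inl ?_⟩
      simp only [spPos, D1] at h
      exact (by omega : (a.val : ℕ) = j.1.val ∨ (a.val : ℕ) = j.1.val + 1)
  · constructor
    · rintro ⟨hne, h⟩
      refine ⟨hne, ?_⟩
      simp only [spPos, D1]
      rcases h with h | h
      · exact absurd h not_false
      · have h' : (b.val : ℕ) = i.1.val ∨ (b.val : ℕ) = i.1.val + 1 := h
        omega
    · rintro ⟨hne, h⟩
      refine ⟨hne, Or.inr ?_⟩
      simp only [spPos, D1] at h
      exact (by omega : (b.val : ℕ) = i.1.val ∨ (b.val : ℕ) = i.1.val + 1)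
  · constructor
    · rintro ⟨hne, h⟩
      rcases h with h | h <;> exact absurd h not_false
    · rintro ⟨hne, h⟩
      simp only [spPos, D1] at h
      have : i.1.val ≠ j.1.val := fun h' => hne (congrArg Sum.inr (Subtype.ext (Fin.ext h')))
      omega

/-- Every special path is S-perfect: any graph obtained from a path by adding, for
each edge in some subset of the edges of the path, a new vertex adjacent to exactly
the two endpoints of that edge, is S-perfect. -/
theorem specialPath_SPerfect (n : ℕ) (F : Finset (Fin n)) :
    SPerfect (specialPath n F) := by
  classical
  intro s
  haveI : Fintype ↥s := Fintype.ofFinite ↥s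
  apply alphaS_eq_thetaS ((specialPath n F).induce s) (fun v => spPos v.val)
  · exact fun a b h => Subtype.ext (spPos_injective h)
  · intro u v
    rw [show ((specialPath n F).induce s).Adj u v ↔ (specialPath n F).Adj u.val v.val
      from Iff.rfl]
    rw [specialPath_adj]
    constructor
    · rintro ⟨h1, h2⟩
      exact ⟨fun h => h1 (congrArg Subtype.val h), h2⟩
    · rintro ⟨h1, h2⟩
      exact ⟨fun h => h1 (Subtype.ext h), h2⟩
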